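/- For all natural numbers n ≠ m, there exists a Veltman frame satisfying the frame condition F^n but not F^m. Consequently the logics IL + R^n for distinct n are pairwise incomparable: IL + R^n does not derive R^m. -/

import Mathlib

/-- Formulas of interpretability logic: propositional variables, ⊥, →, □, ▷. -/
inductive ILForm : Type
  | var : ℕ → ILForm
  | bot : ILForm
  | impl : ILForm → ILForm → ILForm
  | box : ILForm → ILForm
  | rhd : ILForm → ILForm → ILForm
  deriving DecidableEq

namespace ILForm

def neg (A : ILForm) : ILForm := impl A bot
def top : ILForm := neg bot
def conj (A B : ILForm) : ILForm := neg (impl A (neg B))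
def disj (A B : ILForm) : ILForm := impl (neg A) B
def dia (A : ILForm) : ILForm := neg (box (neg A))

end ILForm

infixr:30 " ⟹ " => ILForm.impl
infixl:65 " ⋀ " => ILForm.conj
infixl:64 " ⋁ " => ILForm.disj
infix:50 " ▷ " => ILForm.rhd
prefix:70 "□" => ILForm.box
prefix:70 "◇" => ILForm.dia
prefix:70 "∼" => ILForm.neg

/-- Propositional evaluation of a formula, treating boxed and ▷-formulas
(and variables) as atoms evaluated by `g`.  A formula is an instance of a
propositional tautology iff it evaluates to `true` under every such `g`. -/
def ILForm.evalProp (g : ILForm → Bool) : ILForm → Bool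
  | .bot => false
  | .impl a b => !(ILForm.evalProp g a) || ILForm.evalProp g b
  | f => g f

/-- Hilbert-style provability in the interpretability logic IL extended with
an additional set `Ax` of axioms. -/
inductive ILProv (Ax : Set ILForm) : ILForm → Prop
  | ax {A : ILForm} : A ∈ Ax → ILProv Ax A
  | taut {A : ILForm} : (∀ g : ILForm → Bool, A.evalProp g = true) → ILProv Ax A
  | L1 (A B : ILForm) : ILProv Ax ((□(A ⟹ B)) ⟹ ((□A) ⟹ (□B)))
  | L2 (A : ILForm) : ILProv Ax ((□A) ⟹ (□□A))
  | L3 (A : ILForm) : ILProv Ax ((□((□A) ⟹ A)) ⟹ (□A))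
  | J1 (A B : ILForm) : ILProv Ax ((□(A ⟹ B)) ⟹ (A ▷ B))
  | J2 (A B C : ILForm) : ILProv Ax (((A ▷ B) ⋀ (B ▷ C)) ⟹ (A ▷ C))
  | J3 (A B C : ILForm) : ILProv Ax (((A ▷ C) ⋀ (B ▷ C)) ⟹ ((A ⋁ B) ▷ C))
  | J4 (A B : ILForm) : ILProv Ax ((A ▷ B) ⟹ ((◇A) ⟹ (◇B)))
  | J5 (A : ILForm) : ILProv Ax ((◇A) ▷ A)
  | mp {A B : ILForm} : ILProv Ax (A ⟹ B) → ILProv Ax A → ILProv Ax B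
  | nec {A : ILForm} : ILProv Ax A → ILProv Ax (□A)

/-- Substitution of formulas for propositional variables. -/
def ILForm.substVar (σ : ℕ → ILForm) : ILForm → ILForm
  | .var n => σ n
  | .bot => .bot
  | .impl a b => .impl (ILForm.substVar σ a) (ILForm.substVar σ b)
  | .box a => .box (ILForm.substVar σ a)
  | .rhd a b => .rhd (ILForm.substVar σ a) (ILForm.substVar σ b)

/-- All substitution instances of a modal scheme. -/
def instancesOf (A : ILForm) : Set ILForm := {B | ∃ σ : ℕ → ILForm, B = ILForm.substVar σ A}

/-- Helper for simultaneous replacement of subformula occurrences. -/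
def ILForm.hit (ps : List (ILForm × ILForm)) (f : ILForm) : Option ILForm :=
  (ps.find? fun pq => decide (pq.1 = f)).map (·.2)

/-- Simultaneous replacement of (outermost) occurrences of the patterns
`p` by the corresponding `q`, for `(p,q)` in the list `ps`. -/
def ILForm.replL (ps : List (ILForm × ILForm)) : ILForm → ILForm
  | .var n => (ILForm.hit ps (.var n)).getD (.var n)
  | .bot => (ILForm.hit ps .bot).getD .bot
  | .impl a b =>
      (ILForm.hit ps (.impl a b)).getD (.impl (ILForm.replL ps a) (ILForm.replL ps b))
  | .box a => (ILForm.hit ps (.box a)).getD (.box (ILForm.replL ps a))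
  | .rhd a b =>
      (ILForm.hit ps (.rhd a b)).getD (.rhd (ILForm.replL ps a) (ILForm.replL ps b))

/-- The placeholder variables `A_n`, `B_n`, `C_n`, `E_n`. -/
def Av (n : ℕ) : ILForm := .var (4*n)
def Bv (n : ℕ) : ILForm := .var (4*n+1)
def Cv (n : ℕ) : ILForm := .var (4*n+2)
def Ev (n : ℕ) : ILForm := .var (4*n+3)

/-- The slim series `R_n`, defined by the substitutions of the paper:
`R_0 := A_0▷B_0 → ¬(A_0▷¬C_0) ▷ B_0∧□C_0`;
`R_{2n+1} := R_{2n}[¬(A_n▷¬C_n)/¬(A_n▷¬C_n)∧(E_{n+1}▷◇A_{n+1});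
                    B_n∧□C_n/B_n∧□C_n∧(E_{n+1}▷A_{n+1})]`;
`R_{2n+2} := R_{2n+1}[B_n/B_n∧(A_{n+1}▷B_{n+1}); ◇A_{n+1}/¬(A_{n+1}▷¬C_{n+1});
     (E_{n+1}▷A_{n+1})/(E_{n+1}▷A_{n+1})∧(E_{n+1}▷B_{n+1}∧□C_{n+1})]`. -/
def Rser : ℕ → ILForm
  | 0 => (Av 0 ▷ Bv 0) ⟹ ((∼(Av 0 ▷ (∼(Cv 0)))) ▷ ((Bv 0) ⋀ (□(Cv 0))))
  | n+1 =>
    let k := n / 2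
    if n % 2 = 0 then
      ILForm.replL
        [ (∼(Av k ▷ (∼(Cv k))), (∼(Av k ▷ (∼(Cv k)))) ⋀ (Ev (k+1) ▷ (◇(Av (k+1))))),
          ((Bv k) ⋀ (□(Cv k)), ((Bv k) ⋀ (□(Cv k))) ⋀ (Ev (k+1) ▷ Av (k+1))) ]
        (Rser n)
    else
      ILForm.replL
        [ (Bv k, (Bv k) ⋀ (Av (k+1) ▷ Bv (k+1))),
          (◇(Av (k+1)), ∼(Av (k+1) ▷ (∼(Cv (k+1))))),
          (Ev (k+1) ▷ Av (k+1),
            (Ev (k+1) ▷ Av (k+1)) ⋀ (Ev (k+1) ▷ ((Bv (k+1)) ⋀ (□(Cv (k+1)))))) ]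
        (Rser n)

/-- The formulas `X_n` of the well-behaved subhierarchy. -/
def Xt (A B : ℕ → ILForm) : ℕ → ILForm
  | 0 => A 0 ▷ B 0
  | n+1 => A (n+1) ▷ ((B (n+1)) ⋀ (Xt A B n))

/-- The formulas `Y_n` of the well-behaved subhierarchy. -/
def Yt (A C E : ℕ → ILForm) : ℕ → ILForm
  | 0 => ∼(A 0 ▷ (∼(C 0)))
  | n+1 => (∼(A (n+1) ▷ (∼(C (n+1))))) ⋀ (E (n+1) ▷ (Yt A C E n))

/-- The formulas `Z_n` of the well-behaved subhierarchy. -/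
def Zt (A B C E : ℕ → ILForm) : ℕ → ILForm
  | 0 => (B 0) ⋀ (□(C 0))
  | n+1 => (((B (n+1)) ⋀ (Xt A B n)) ⋀ (□(C (n+1)))) ⋀
             ((E (n+1) ▷ A n) ⋀ (E (n+1) ▷ (Zt A B C E n)))

/-- The principles `R̃_n = X_n → Y_n ▷ Z_n`. -/
def Rtilde (A B C E : ℕ → ILForm) (n : ℕ) : ILForm :=
  (Xt A B n) ⟹ ((Yt A C E n) ▷ (Zt A B C E n))

/-- `X_{k-1}`, with the convention `X_{-1} = ⊤`. -/
def Xminus (A B : ℕ → ILForm) : ℕ → ILForm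
  | 0 => ILForm.top
  | n+1 => Xt A B n

/-- `A_{k-1}`, with the convention `A_{-1} = ⊤`. -/
def Aminus (A : ℕ → ILForm) : ℕ → ILForm
  | 0 => ILForm.top
  | n+1 => A n

/-- `Z_{k-1}`, with the convention `Z_{-1} = ⊤`. -/
def Zminus (A B C E : ℕ → ILForm) : ℕ → ILForm
  | 0 => ILForm.top
  | n+1 => Zt A B C E n

/-- Veltman frames. -/
structure Veltman where
  W : Type
  ne : Nonempty W
  R : W → W → Prop
  S : W → W → W → Prop
  R_trans : ∀ {x y z}, R x y → R y z → R x z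
  R_cwf : WellFounded (fun x y => R y x)
  S_dom : ∀ {x y z}, S x y z → R x y ∧ R x z
  S_refl : ∀ {x y}, R x y → S x y y
  S_trans : ∀ {x y z u}, S x y z → S x z u → S x y u
  R_sub_S : ∀ {x y z}, R x y → R y z → S x y z

/-- Forcing in a Veltman model. -/
def force (F : Veltman) (V : ℕ → F.W → Prop) : ILForm → F.W → Prop
  | .var n => fun w => V n w
  | .bot => fun _ => False
  | .impl a b => fun w => force F V a w → force F V b w
  | .box a => fun w => ∀ v, F.R w v → force F V a v
  | .rhd a b => fun w => ∀ v, F.R w v → force F V a v →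
      ∃ u, F.S w v u ∧ force F V b u

/-- A formula is valid on a frame if it is forced at every world under every valuation. -/
def valid (F : Veltman) (A : ILForm) : Prop := ∀ (V : ℕ → F.W → Prop) (w : F.W), force F V A w

/-- The `C`-assuring successor relation `x R^C_⊩ y`. -/
def RC (F : Veltman) (V : ℕ → F.W → Prop) (C : ILForm) (x y : F.W) : Prop :=
  F.R x y ∧ force F V C y ∧ ∀ z, F.S x y z → force F V C z

/-- The ternary relations `G_n` on a Veltman frame. -/
def G (F : Veltman) : ℕ → F.W → F.W → F.W → Prop
  | 0 => fun x y z => ∀ u, F.R z u → F.S x y u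
  | n+1 => fun x y z => ∀ u, F.R z u → F.S x y u ∧ ∀ v, F.S x u v → G F n z u v

/-- The frame conditions `F_n` of the slim hierarchy. -/
def Fcond (F : Veltman) (n : ℕ) : Prop :=
  ∀ w x y z, F.R w x → F.R x y → F.S w y z → G F n x y z

/-- The quaternary relations `B_n` on a Veltman frame. -/
def Bq (F : Veltman) : ℕ → F.W → F.W → F.W → F.W → Prop
  | 0 => fun x1 x0 y0 y1 => F.R x1 x0 ∧ F.R x0 y0 ∧ F.S x1 y0 y1
  | n+1 => fun x' x0 y0 y' => ∃ xn yn, F.R x' xn ∧ Bq F n xn x0 y0 yn ∧ F.S x' yn y'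

/-- The formulas `U_n` of the broad series (with `U_0 := ⊤`, unused). -/
def Ubr (C : ILForm) (D : ℕ → ILForm) : ℕ → ILForm
  | 0 => ILForm.top
  | 1 => ◇(∼(D 1 ▷ (∼C)))
  | n+2 => ◇(((D (n+1)) ▷ (D (n+2))) ⋀ (Ubr C D (n+1)))

/-- The frame conditions `F^n` of the broad series. -/
def FbroadCond (F : Veltman) (n : ℕ) : Prop :=
  ∀ x1 x0 y0 y1, Bq F n x1 x0 y0 y1 → ∀ u, F.R y1 u → F.S x0 y0 u

/-- The principles `R^n` of the broad series. -/
def Rbroad (A B C : ILForm) (D : ℕ → ILForm) : ℕ → ILForm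
  | 0 => (A ▷ B) ⟹ ((∼(A ▷ (∼C))) ▷ (B ⋀ (□C)))
  | n+1 => (A ▷ B) ⟹ (((Ubr C D (n+1)) ⋀ (D (n+1) ▷ A)) ▷ (B ⋀ (□C)))

section Semantics

variable {F : Veltman} {V : ℕ → F.W → Prop}

lemma force_neg {A : ILForm} {w : F.W} :
    force F V (∼A) w ↔ ¬ force F V A w := Iff.rfl

lemma force_conj {A B : ILForm} {w : F.W} :
    force F V (A ⋀ B) w ↔ force F V A w ∧ force F V B w := by
  constructor
  · intro h
    by_cases hA : force F V A w
    · refine ⟨hA, ?_⟩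
      by_contra hB
      exact h (fun _ hb => hB hb)
    · exact absurd (fun ha _ => absurd ha hA) h
  · rintro ⟨hA, hB⟩ h
    exact h hA hB

lemma force_dia {A : ILForm} {w : F.W} :
    force F V (◇A) w ↔ ∃ v, F.R w v ∧ force F V A v := by
  constructor
  · intro h
    by_contra hne
    exact h (fun v hv ha => hne ⟨v, hv, ha⟩)
  · rintro ⟨v, hv, ha⟩ h
    exact h v hv ha

/-- Substitution lemma. -/
lemma force_subst (σ : ℕ → ILForm) (A : ILForm) (w : F.W) :
    force F V (A.substVar σ) w ↔ force F (fun n u => force F V (σ n) u) A w := by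
  induction A generalizing w with
  | var n => rfl
  | bot => rfl
  | impl a b iha ihb => exact imp_congr (iha w) (ihb w)
  | box a iha =>
      exact forall_congr' fun v => imp_congr Iff.rfl (iha v)
  | rhd a b iha ihb =>
      refine forall_congr' fun v => imp_congr Iff.rfl (imp_congr (iha v) ?_)
      exact exists_congr fun u => and_congr Iff.rfl (ihb u)

open Classical in
lemma force_taut {A : ILForm} (h : ∀ g : ILForm → Bool, A.evalProp g = true)
    (w : F.W) : force F V A w := by
  classical
  set g : ILForm → Bool := fun f => decide (force F V f w) with hg
  have key : ∀ B : ILForm, B.evalProp g = true ↔ force F V B w := by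
    intro B
    induction B with
    | var n => simp [ILForm.evalProp, hg]
    | bot => simp [ILForm.evalProp, force]
    | impl a b iha ihb =>
        simp only [ILForm.evalProp, Bool.or_eq_true, Bool.not_eq_true']
        constructor
        · rintro (h1 | h1) h2
          · exact absurd (iha.2 h2) (by simp [h1])
          · exact ihb.1 h1
        · intro h1
          by_cases ha : force F V a w
          · exact Or.inr (ihb.2 (h1 ha))
          · left
            have : ILForm.evalProp g a ≠ true := fun hh => ha (iha.1 hh)
            simpa using this
    | box a iha => simp [ILForm.evalProp, hg]
    | rhd a b iha ihb => simp [ILForm.evalProp, hg]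
  exact (key A).1 (h g)

lemma valid_L3 (A : ILForm) : valid F ((□((□A) ⟹ A)) ⟹ (□A)) := by
  intro V w h
  have main : ∀ v, F.R w v → force F V A v := by
    intro v
    induction v using F.R_cwf.induction with
    | _ v ih =>
      intro hwv
      exact h v hwv (fun u hvu => ih u hvu (F.R_trans hwv hvu))
  exact main

lemma soundness {Ax : Set ILForm} {A : ILForm}
    (h : ILProv Ax A) (hAx : ∀ B ∈ Ax, valid F B) : valid F A := by
  induction h with
  | ax hB => exact hAx _ hB
  | taut ht => intro V w; exact force_taut ht w
  | L1 A B => intro V w h1 h2 v hv; exact h1 v hv (h2 v hv)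
  | L2 A => intro V w h1 v hv u hu; exact h1 u (F.R_trans hv hu)
  | L3 A => exact valid_L3 A
  | J1 A B => intro V w h1 v hv ha; exact ⟨v, F.S_refl hv, h1 v hv ha⟩
  | J2 A B C =>
      intro V w h1 v hv ha
      rw [force_conj] at h1
      obtain ⟨u1, hs1, hb⟩ := h1.1 v hv ha
      obtain ⟨u2, hs2, hc⟩ := h1.2 u1 (F.S_dom hs1).2 hb
      exact ⟨u2, F.S_trans hs1 hs2, hc⟩
  | J3 A B C =>
      intro V w h1 v hv hab
      rw [force_conj] at h1
      by_cases hA : force F V A v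
      · exact h1.1 v hv hA
      · exact h1.2 v hv (hab hA)
  | J4 A B =>
      intro V w h1 h2
      rw [force_dia] at h2 ⊢
      obtain ⟨v, hv, ha⟩ := h2
      obtain ⟨u, hs, hb⟩ := h1 v hv ha
      exact ⟨u, (F.S_dom hs).2, hb⟩
  | J5 A =>
      intro V w v hv hd
      rw [force_dia] at hd
      obtain ⟨z, hz, ha⟩ := hd
      exact ⟨z, F.R_sub_S hv hz, ha⟩
  | mp h1 h2 ih1 ih2 => intro V w; exact ih1 V w (ih2 V w)
  | nec h1 ih1 => intro V w v hv; exact ih1 V v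

end Semantics

section RSound

variable {F : Veltman} {V : ℕ → F.W → Prop}

/-- Extraction of a witness from a refuted `▷`. -/
lemma not_rhd_extract {A B : ILForm} {w : F.W}
    (h : ¬ force F V (A ▷ B) w) :
    ∃ v, F.R w v ∧ force F V A v ∧ ∀ u, F.S w v u → ¬ force F V B u := by
  by_contra hne
  apply h
  intro v hv ha
  by_contra hne2
  exact hne ⟨v, hv, ha, fun u hs hb => hne2 ⟨u, hs, hb⟩⟩

/-- Unraveling the formula `U_{k+1}` into a broad chain. -/
lemma Ubr_chain (C : ILForm) (D : ℕ → ILForm) :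
    ∀ (k : ℕ) (x : F.W), force F V (Ubr C D (k+1)) x →
      ∃ x0 y0 y, F.R x0 y0 ∧ (∀ z, F.S x0 y0 z → force F V C z) ∧
        force F V (D (k+1)) y ∧ F.R x y ∧
        (∀ y2, F.S x y y2 → Bq F k x x0 y0 y2) := by
  intro k
  induction k with
  | zero =>
      intro x hx
      rw [show Ubr C D 1 = ◇(∼(D 1 ▷ (∼C))) from rfl, force_dia] at hx
      obtain ⟨x0, hxx0, hx0⟩ := hx
      rw [force_neg] at hx0
      obtain ⟨y0, hx0y0, hD1, hC⟩ := not_rhd_extract hx0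
      refine ⟨x0, y0, y0, hx0y0, ?_, hD1, F.R_trans hxx0 hx0y0, ?_⟩
      · intro z hz
        have := hC z hz
        rw [force_neg] at this
        exact not_not.1 this
      · intro y2 hs
        exact ⟨hxx0, hx0y0, hs⟩
  | succ k ih =>
      intro x hx
      rw [show Ubr C D (k+1+1) = ◇(((D (k+1)) ▷ (D (k+2))) ⋀ (Ubr C D (k+1))) from rfl,
        force_dia] at hx
      obtain ⟨x', hxx', hx'⟩ := hx
      rw [force_conj] at hx'
      obtain ⟨x0, y0, y', hx0y0, hC, hD, hx'y', hQ⟩ := ih x' hx'.2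
      obtain ⟨y'', hs, hD2⟩ := hx'.1 y' hx'y' hD
      refine ⟨x0, y0, y'', hx0y0, hC, hD2, F.R_trans hxx' (F.S_dom hs).2, ?_⟩
      intro y2 hs2
      exact ⟨x', y'', hxx', hQ y'' hs, hs2⟩

/-- Soundness of the scheme `R^n` on frames satisfying `F^n`. -/
lemma Rbroad_sound {n : ℕ} (h : FbroadCond F n) (A B C : ILForm) (D : ℕ → ILForm) :
    valid F (Rbroad A B C D n) := by
  cases n with
  | zero =>
      intro V w hAB y hwy hy
      rw [force_neg] at hy
      obtain ⟨v, hyv, hA, hC⟩ := not_rhd_extract hy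
      obtain ⟨b, hsb, hB⟩ := hAB v (F.R_trans hwy hyv) hA
      refine ⟨b, F.S_trans (F.R_sub_S hwy hyv) hsb, ?_⟩
      rw [force_conj]
      refine ⟨hB, ?_⟩
      intro u hbu
      have hs : F.S y v u := h w y v b ⟨hwy, hyv, hsb⟩ u hbu
      have := hC u hs
      rw [force_neg] at this
      exact not_not.1 this
  | succ k =>
      intro V w hAB xn hwxn hxn
      rw [force_conj] at hxn
      obtain ⟨x0, y0, y, hx0y0, hC, hD, hxny, hQ⟩ := Ubr_chain C D k xn hxn.1
      obtain ⟨yA, hsA, hA⟩ := hxn.2 y hxny hD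
      have hBqk : Bq F k xn x0 y0 yA := hQ yA hsA
      obtain ⟨yB, hsB, hB⟩ := hAB yA (F.R_trans hwxn (F.S_dom hsA).2) hA
      have hBq : Bq F (k+1) w x0 y0 yB := ⟨xn, yA, hwxn, hBqk, hsB⟩
      refine ⟨yB, F.S_trans (F.R_sub_S hwxn (F.S_dom hsA).2) hsB, ?_⟩
      rw [force_conj]
      refine ⟨hB, fun u hu => ?_⟩
      exact hC u (h w x0 y0 yB hBq u hu)

end RSound

section FrameConstruction

/-- Worlds of the counterexample frames. -/
inductive Wd : Type
  | X : ℕ → Wd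
  | Y : ℕ → Wd
  | U : Wd
  deriving DecidableEq

open Wd

/-- The accessibility relation of the frame `𝔉_m`. -/
def Rm (m : ℕ) : Wd → Wd → Prop
  | X j, X i => i < j ∧ j ≤ m+1
  | X j, Y i => i ≤ j ∧ j ≤ m+1
  | X j, U => 1 ≤ j ∧ j ≤ m+1
  | Y i, U => i = m+1
  | _, _ => False

/-- The exceptional `S`-pairs of `𝔉_m`. -/
def ExS (m : ℕ) (x y z : Wd) : Prop :=
  ∃ j, j ≤ m ∧ x = X (j+1) ∧ (y = Y j ∨ y = X j) ∧ z = Y (j+1)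

/-- The `S`-relation of `𝔉_m`. -/
def Sm (m : ℕ) (x y z : Wd) : Prop :=
  Rm m x y ∧ Rm m x z ∧ (y = z ∨ Rm m y z ∨ z = U ∨ ExS m x y z)

def rk : Wd → ℕ
  | X j => j + 2
  | Y _ => 1
  | U => 0

lemma Rm_trans {m : ℕ} : ∀ {x y z : Wd}, Rm m x y → Rm m y z → Rm m x z := by
  intro x y z hxy hyz
  cases x <;> cases y <;> cases z <;> simp [Rm] at * <;> omega

lemma Rm_rk {m : ℕ} : ∀ {x y : Wd}, Rm m x y → rk y < rk x := by
  intro x y hxy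
  cases x <;> cases y <;> simp [Rm, rk] at * <;> omega

lemma Rm_wf (m : ℕ) : WellFounded (fun x y => Rm m y x) :=
  Subrelation.wf (fun h => Rm_rk h) (InvImage.wf rk Nat.lt_wfRel.wf)

lemma Sm_trans {m : ℕ} : ∀ {x y z u : Wd}, Sm m x y z → Sm m x z u → Sm m x y u := by
  rintro x y z u ⟨hxy, hxz, h1⟩ ⟨-, hxu, h2⟩
  refine ⟨hxy, hxu, ?_⟩
  rcases h2 with rfl | h2 | rfl | h2
  · exact h1
  · -- Rm z u
    rcases h1 with rfl | h1 | rfl | h1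
    · exact Or.inr (Or.inl h2)
    · exact Or.inr (Or.inl (Rm_trans h1 h2))
    · -- z = U, Rm U u : impossible
      exact absurd h2 (by simp [Rm])
    · -- ExS x y z, Rm z u : z = Y (j+1), so u = U
      obtain ⟨j, hj, rfl, hy, rfl⟩ := h1
      cases u <;> simp [Rm] at h2 <;> simp
  · exact Or.inr (Or.inr (Or.inl rfl))
  · -- ExS x z u
    obtain ⟨j, hj, rfl, hz, rfl⟩ := h2
    rcases h1 with rfl | h1 | rfl | h1
    · exact Or.inr (Or.inr (Or.inr ⟨j, hj, rfl, hz, rfl⟩))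
    · -- Rm y z with z = Y j or X j, and Rm (X (j+1)) y
      rcases hz with rfl | rfl
      · -- z = Y j : y = X i with j ≤ i and i < j+1, so y = X j
        cases y with
        | X i =>
            simp only [Rm] at h1 hxy
            have hij : i = j := by omega
            subst hij
            exact Or.inr (Or.inr (Or.inr ⟨i, hj, rfl, Or.inr rfl, rfl⟩))
        | Y i => simp [Rm] at h1
        | U => simp [Rm] at h1
      · -- z = X j : y = X i with j < i < j+1 impossible
        cases y with
        | X i => simp only [Rm] at h1 hxy; omega
        | Y i => simp [Rm] at h1
        | U => simp [Rm] at h1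
    · -- z = U, but z = Y j ∨ z = X j
      rcases hz with h | h <;> exact absurd h.symm (by simp)
    · -- ExS x y z and z = Y j ∨ z = X j
      obtain ⟨j', hj', hx', hy', rfl⟩ := h1
      rcases hz with h | h
      · simp only [Wd.X.injEq] at hx'
        simp only [Wd.Y.injEq] at h
        omega
      · exact absurd h (by simp)

/-- The Veltman frame `𝔉_m`. -/
def Fr (m : ℕ) : Veltman where
  W := Wd
  ne := ⟨U⟩
  R := Rm m
  S := Sm m
  R_trans := Rm_trans
  R_cwf := Rm_wf m
  S_dom h := ⟨h.1, h.2.1⟩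
  S_refl h := ⟨h, h, Or.inl rfl⟩
  S_trans := Sm_trans
  R_sub_S {x y z} h1 h2 := ⟨h1, Rm_trans h1 h2, Or.inr (Or.inl h2)⟩

end FrameConstruction

section FrameLemmas

open Wd

lemma Fr_R {m : ℕ} : (Fr m).R = Rm m := rfl
lemma Fr_S {m : ℕ} : (Fr m).S = Sm m := rfl

variable {m : ℕ}

lemma Sm_U {x z : Wd} (h : Sm m x U z) : z = U := by
  rcases h.2.2 with rfl | h2 | rfl | ⟨j, _, _, hy, _⟩
  · rfl
  · exact absurd h2 (by cases z <;> simp [Fr_R, Rm])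
  · rfl
  · rcases hy with h2 | h2 <;> exact absurd h2 (by simp)

lemma Bq_R00 : ∀ {n : ℕ} {x' x0 y0 y' : Wd}, Bq (Fr m) n x' x0 y0 y' → Rm m x0 y0 := by
  intro n
  induction n with
  | zero => rintro x' x0 y0 y' ⟨-, h, -⟩; exact h
  | succ k ih => rintro x' x0 y0 y' ⟨xk, yk, -, hB, -⟩; exact ih hB

lemma Bq_U : ∀ {n : ℕ} {x' x0 y' : Wd}, Bq (Fr m) n x' x0 U y' → y' = U := by
  intro n
  induction n with
  | zero =>
      rintro x' x0 y' ⟨-, -, hS⟩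
      exact Sm_U hS
  | succ k ih =>
      rintro x' x0 y' ⟨xk, yk, -, hB, hS⟩
      have := ih hB
      subst this
      exact Sm_U hS

lemma Bq_X0 : ∀ {n : ℕ} {x' y0 y' : Wd}, Bq (Fr m) n x' (X 0) y0 y' →
    ∃ a, x' = X a ∧ n+1 ≤ a ∧ a ≤ m+1 := by
  intro n
  induction n with
  | zero =>
      rintro x' y0 y' ⟨h1, -, -⟩
      cases x' with
      | X a => simp only [Fr_R, Rm] at h1; exact ⟨a, rfl, by omega, h1.2⟩
      | Y i => simp [Fr_R, Rm] at h1
      | U => simp [Fr_R, Rm] at h1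
  | succ k ih =>
      rintro x' y0 y' ⟨xk, yk, hR, hB, -⟩
      obtain ⟨a, rfl, ha1, ha2⟩ := ih hB
      cases x' with
      | X b => simp only [Fr_R, Rm] at hR; exact ⟨b, rfl, by omega, hR.2⟩
      | Y i => simp [Fr_R, Rm] at hR
      | U => simp [Fr_R, Rm] at hR

lemma Bq_inv : ∀ {n : ℕ} {x' x0 y0 y' : Wd}, Bq (Fr m) n x' x0 y0 y' →
    y' = U ∨ (y0 = y' ∨ Rm m y0 y') ∨ ∃ v, y' = Y v ∧ (Rm m x0 U ∨ v ≤ n+1) := by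
  intro n
  induction n with
  | zero =>
      rintro x1 x0 y0 y1 ⟨hx, h0, hSa, hSb, hS3⟩
      rcases hS3 with rfl | h | rfl | ⟨j, hj, rfl, hy, rfl⟩
      · exact Or.inr (Or.inl (Or.inl rfl))
      · exact Or.inr (Or.inl (Or.inr h))
      · exact Or.inl rfl
      · right; right
        refine ⟨j+1, rfl, ?_⟩
        rcases hy with rfl | rfl
        · cases x0 with
          | X k =>
              simp only [Fr_R, Rm] at hx h0
              rcases Nat.eq_zero_or_pos k with rfl | hk
              · right; omega
              · left; simp only [Fr_R, Rm]; omega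
          | Y i => simp [Fr_R, Rm] at h0
          | U => simp [Fr_R, Rm] at h0
        · cases x0 with
          | X k => simp only [Fr_R, Rm] at hx h0; omega
          | Y i => simp [Fr_R, Rm] at h0
          | U => simp [Fr_R, Rm] at h0
  | succ k ih =>
      rintro x'' x0 y0 y'' ⟨x', y', hxx, hB, hS⟩
      obtain ⟨hSa, hSb, hS3⟩ := hS
      rcases ih hB with rfl | hD2 | ⟨v, rfl, hD3⟩
      · exact Or.inl (Sm_U ⟨hSa, hSb, hS3⟩)
      · rcases hS3 with rfl | h | rfl | ⟨j, hj, rfl, hy, rfl⟩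
        · exact Or.inr (Or.inl hD2)
        · rcases hD2 with rfl | hD2
          · exact Or.inr (Or.inl (Or.inr h))
          · exact Or.inr (Or.inl (Or.inr (Rm_trans hD2 h)))
        · exact Or.inl rfl
        · right; right
          refine ⟨j+1, rfl, ?_⟩
          have h00 : Rm m x0 y0 := Bq_R00 hB
          rcases hy with rfl | rfl
          · rcases hD2 with rfl | hD2
            · cases x0 with
              | X t =>
                  simp only [Fr_R, Rm] at h00
                  rcases Nat.eq_zero_or_pos t with rfl | ht
                  · right; omega
                  · left; simp only [Fr_R, Rm]; omega
              | Y i => simp [Fr_R, Rm] at h00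
              | U => simp [Fr_R, Rm] at h00
            · cases y0 with
              | X i =>
                  cases x0 with
                  | X t =>
                      simp only [Fr_R, Rm] at h00 hD2
                      left; simp only [Fr_R, Rm]; omega
                  | Y i2 => simp [Fr_R, Rm] at h00
                  | U => simp [Fr_R, Rm] at h00
              | Y i => simp [Fr_R, Rm] at hD2
              | U => simp [Fr_R, Rm] at hD2
          · rcases hD2 with rfl | hD2
            · cases x0 with
              | X t =>
                  simp only [Fr_R, Rm] at h00
                  left; simp only [Fr_R, Rm]; omega
              | Y i => simp [Fr_R, Rm] at h00
              | U => simp [Fr_R, Rm] at h00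
            · cases y0 with
              | X i =>
                  cases x0 with
                  | X t =>
                      simp only [Fr_R, Rm] at h00 hD2
                      left; simp only [Fr_R, Rm]; omega
                  | Y i2 => simp [Fr_R, Rm] at h00
                  | U => simp [Fr_R, Rm] at h00
              | Y i => simp [Fr_R, Rm] at hD2
              | U => simp [Fr_R, Rm] at hD2
      · rcases hS3 with rfl | h | rfl | ⟨j, hj, hx', hy, rfl⟩
        · exact Or.inr (Or.inr ⟨v, rfl, hD3.imp id (by omega)⟩)
        · cases y'' with
          | X i => simp [Fr_R, Rm] at h
          | Y i => simp [Fr_R, Rm] at h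
          | U => exact Or.inl rfl
        · exact Or.inl rfl
        · rcases hy with h | h
          · simp only [Wd.Y.injEq] at h
            exact Or.inr (Or.inr ⟨j+1, rfl, hD3.imp id (fun hh => by omega)⟩)
          · exact absurd h (by simp)

lemma Fbroad_Fr {n : ℕ} (hnm : n ≠ m) : FbroadCond (Fr m) n := by
  intro x1 x0 y0 y1 hBq u hu
  have h00 : Rm m x0 y0 := Bq_R00 hBq
  rcases Bq_inv hBq with rfl | hD2 | ⟨v, rfl, hD3⟩
  · exact absurd hu (by cases u <;> simp [Fr_R, Rm])
  · have hy0u : Rm m y0 u := by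
      rcases hD2 with rfl | h2
      · exact hu
      · exact Rm_trans h2 hu
    exact ⟨h00, Rm_trans h00 hy0u, Or.inr (Or.inl hy0u)⟩
  · cases u with
    | X i => simp [Fr_R, Rm] at hu
    | Y i => simp [Fr_R, Rm] at hu
    | U =>
        simp only [Fr_R, Rm] at hu
        subst hu
        rcases hD3 with hx0U | hv
        · exact ⟨h00, hx0U, Or.inr (Or.inr (Or.inl rfl))⟩
        · cases x0 with
          | X t =>
              rcases Nat.eq_zero_or_pos t with rfl | ht
              · obtain ⟨a, -, ha1, ha2⟩ := Bq_X0 hBq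
                exact absurd (show n = m by omega) hnm
              · have ht2 : t ≤ m+1 := by
                  cases y0 <;> simp [Fr_R, Rm] at h00 <;> omega
                refine ⟨h00, ?_, Or.inr (Or.inr (Or.inl rfl))⟩
                simp only [Fr_R, Rm]
                exact ⟨ht, ht2⟩
          | Y i =>
              cases y0 with
              | X i2 => simp [Fr_R, Rm] at h00
              | Y i2 => simp [Fr_R, Rm] at h00
              | U => exact absurd (Bq_U hBq) (by simp)
          | U => cases y0 <;> simp [Fr_R, Rm] at h00
  
lemma Bq_diag : ∀ j, j ≤ m → Bq (Fr m) j (X (j+1)) (X 0) (Y 0) (Y (j+1)) := by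
  intro j
  induction j with
  | zero =>
      intro hj
      refine ⟨?_, ?_, ?_, ?_, ?_⟩
      · show Rm m (X 1) (X 0); simp only [Fr_R, Rm]; omega
      · show Rm m (X 0) (Y 0); simp only [Fr_R, Rm]; omega
      · show Rm m (X 1) (Y 0); simp only [Fr_R, Rm]; omega
      · show Rm m (X 1) (Y 1); simp only [Fr_R, Rm]; omega
      · exact Or.inr (Or.inr (Or.inr ⟨0, by omega, rfl, Or.inl rfl, rfl⟩))
  | succ j ih =>
      intro hj
      refine ⟨X (j+1), Y (j+1), ?_, ih (by omega), ?_, ?_, ?_⟩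
      · show Rm m (X (j+2)) (X (j+1)); simp only [Fr_R, Rm]; omega
      · show Rm m (X (j+2)) (Y (j+1)); simp only [Fr_R, Rm]; omega
      · show Rm m (X (j+2)) (Y (j+2)); simp only [Fr_R, Rm]; omega
      · exact Or.inr (Or.inr (Or.inr ⟨j+1, by omega, rfl, Or.inl rfl, rfl⟩))

lemma notFbroad_Fr : ¬ FbroadCond (Fr m) m := by
  intro h
  have hd := Bq_diag m le_rfl
  have h2 := h _ _ _ _ hd U (show Rm m (Y (m+1)) U from rfl)
  exact absurd h2.2.1 (by simp [Fr_R, Rm])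

end FrameLemmas

section Falsify

open Wd

/-- The falsifying valuation on `𝔉_m`. -/
def Vm (m : ℕ) : ℕ → Wd → Prop
  | 0 => fun w => w = Y m
  | 1 => fun w => w = Y (m+1)
  | 2 => fun w => w ≠ U
  | k+3 => fun w => w = Y k

variable {m : ℕ}

lemma ante : force (Fr m) (Vm m) ((ILForm.var 0) ▷ (ILForm.var 1)) (X (m+1)) := by
  intro v hv h0
  have hv0 : v = Y m := h0
  subst hv0
  refine ⟨Y (m+1), ?_, rfl⟩
  exact ⟨(by simp only [Rm]; omega), (by simp only [Rm]; omega),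
    Or.inr (Or.inr (Or.inr ⟨m, le_rfl, rfl, Or.inl rfl, rfl⟩))⟩

lemma negrhd (d : ℕ) (hd : Vm m d (Y 0)) :
    force (Fr m) (Vm m) (∼((ILForm.var d) ▷ (∼(ILForm.var 2)))) (X 0) := by
  intro h
  obtain ⟨u, hs, hu⟩ := h (Y 0) (by simp only [Fr_R, Rm]; omega) hd
  have hU : u = U := by
    by_contra hne
    exact hu hne
  subst hU
  exact absurd hs.2.1 (by simp only [Fr_R, Rm]; omega)

lemma UbrX : ∀ j, 1 ≤ j → j ≤ m →
    force (Fr m) (Vm m) (Ubr (.var 2) (fun i => .var (2+i)) j) (X j)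
  | 0, h, _ => absurd h (by omega)
  | 1, _, hm => by
      rw [show Ubr (ILForm.var 2) (fun i => ILForm.var (2+i)) 1
          = ◇(∼((ILForm.var 3) ▷ (∼(ILForm.var 2)))) from rfl]
      exact force_dia.2 ⟨X 0, (by simp only [Fr_R, Rm]; omega), negrhd 3 rfl⟩
  | (t+2), _, hm => by
      rw [show Ubr (ILForm.var 2) (fun i => ILForm.var (2+i)) (t+2)
          = ◇(((ILForm.var (2+(t+1))) ▷ (ILForm.var (2+(t+2))))
              ⋀ (Ubr (ILForm.var 2) (fun i => ILForm.var (2+i)) (t+1))) from rfl,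
        show (2:ℕ)+(t+1) = t+3 from by omega,
        show (2:ℕ)+(t+2) = t+4 from by omega]
      refine force_dia.2 ⟨X (t+1), (by simp only [Fr_R, Rm]; omega), ?_⟩
      refine force_conj.2 ?_
      constructor
      · intro v hv h3
        have hv' : v = Y t := h3
        subst hv'
        refine ⟨Y (t+1), ?_, rfl⟩
        exact ⟨(by simp only [Rm]; omega), (by simp only [Rm]; omega),
          Or.inr (Or.inr (Or.inr ⟨t, by omega, rfl, Or.inl rfl, rfl⟩))⟩
      · exact UbrX (t+1) (by omega) (by omega)

lemma falsify : ¬ force (Fr m) (Vm m)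
    (Rbroad (.var 0) (.var 1) (.var 2) (fun i => .var (2+i)) m) (X (m+1)) := by
  cases m with
  | zero =>
      intro hf
      obtain ⟨u, hs, hBC⟩ := hf ante (X 0) (by simp only [Fr_R, Rm]; omega) (negrhd 0 rfl)
      replace hBC := force_conj.1 hBC
      have hu : u = Y 1 := hBC.1
      subst hu
      exact hBC.2 U (show (Fr 0).R (Y 1) U from rfl) rfl
  | succ k =>
      intro hf
      have hXm : force (Fr (k+1)) (Vm (k+1))
          ((Ubr (.var 2) (fun i => .var (2+i)) (k+1)) ⋀ ((ILForm.var (2+(k+1))) ▷ (ILForm.var 0)))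
          (X (k+1)) := by
        refine force_conj.2 ?_
        constructor
        · exact UbrX (k+1) (by omega) le_rfl
        · intro v hv hD
          rw [show (2:ℕ)+(k+1) = k+3 from by omega] at hD
          have hv' : v = Y k := hD
          subst hv'
          refine ⟨Y (k+1), ?_, rfl⟩
          exact ⟨(by simp only [Rm]; omega), (by simp only [Rm]; omega),
            Or.inr (Or.inr (Or.inr ⟨k, by omega, rfl, Or.inl rfl, rfl⟩))⟩
      obtain ⟨u, hs, hBC⟩ := hf ante (X (k+1)) (by simp only [Fr_R, Rm]; omega) hXm
      replace hBC := force_conj.1 hBC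
      have hu : u = Y (k+2) := hBC.1
      subst hu
      exact hBC.2 U (show (Fr (k+1)).R (Y (k+2)) U from rfl) rfl

end Falsify

/-- for `n ≠ m` there is a Veltman frame satisfying `F^n` but not
`F^m`; consequently `IL + R^n` does not derive `R^m`. -/
theorem stmt16 (n m : ℕ) (hnm : n ≠ m) :
    (∃ F : Veltman, FbroadCond F n ∧ ¬ FbroadCond F m) ∧
    ¬ ILProv
        (instancesOf (Rbroad (ILForm.var 0) (ILForm.var 1) (ILForm.var 2)
          (fun i => ILForm.var (2+i)) n))
        (Rbroad (ILForm.var 0) (ILForm.var 1) (ILForm.var 2)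
          (fun i => ILForm.var (2+i)) m) := by
  constructor
  · exact ⟨Fr m, Fbroad_Fr hnm, notFbroad_Fr⟩
  · intro hprov
    have hval : valid (Fr m)
        (Rbroad (.var 0) (.var 1) (.var 2) (fun i => .var (2+i)) m) := by
      refine soundness hprov ?_
      rintro B ⟨σ, rfl⟩
      intro V w
      rw [force_subst]
      exact Rbroad_sound (Fbroad_Fr hnm) _ _ _ _ _ _
    exact falsify (hval (Vm m) (Wd.X (m+1)))
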